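/- Let H be a bi-hedge graph (every triangle covered by at most two hedges) and x a hedge. Every induced P_3 in the graph obtained from H by removing all hedges of R(x) is already an induced P_3 in H; i.e., no new induced P_3 on the same vertex triple is created by the removal. -/
import Mathlib


/-- Adjacency after deleting the set `U` of hedges, where `ℓ` assigns to each edge its
hedge. -/
def delAdj {V Λ : Type*} (G : SimpleGraph V) (ℓ : Sym2 V → Λ) (U : Set Λ)
    (a b : V) : Prop :=
  G.Adj a b ∧ ℓ s(a, b) ∉ U

/-- `D(x)`: hedges `y` such that some triangle has exactly one edge in hedge `x` and its
other two edges in hedge `y`. -/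
def Dset {V Λ : Type*} (G : SimpleGraph V) (ℓ : Sym2 V → Λ) (x : Λ) : Set Λ :=
  {y | y ≠ x ∧ ∃ a b c : V, G.Adj a b ∧ G.Adj b c ∧ G.Adj a c ∧
    ℓ s(a, c) = x ∧ ℓ s(a, b) = y ∧ ℓ s(b, c) = y}

/-- `R(x)`: the hedges dominating `x`. -/
def Rset {V Λ : Type*} (G : SimpleGraph V) (ℓ : Sym2 V → Λ) (x : Λ) : Set Λ :=
  {y | Relation.ReflTransGen (fun a b => a ∈ Dset G ℓ b) y x}

/-- in a bi-hedge graph, every induced `P₃` of the graph obtained by removing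
all hedges of `R(x)` is already an induced `P₃` of `H`; no new induced `P₃` is created. -/
theorem stmt18 {V Λ : Type*} (G : SimpleGraph V) (ℓ : Sym2 V → Λ)
    (hbi : ∀ a b c : V, G.Adj a b → G.Adj b c → G.Adj a c →
      (ℓ s(a, b) = ℓ s(b, c) ∨ ℓ s(b, c) = ℓ s(a, c) ∨ ℓ s(a, b) = ℓ s(a, c)))
    (x : Λ) :
    ∀ a b c : V, delAdj G ℓ (Rset G ℓ x) a b → delAdj G ℓ (Rset G ℓ x) b c →
      a ≠ c → ¬ delAdj G ℓ (Rset G ℓ x) a c →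
      (G.Adj a b ∧ G.Adj b c ∧ ¬ G.Adj a c) := by
  intro a b c hab hbc hac hnd
  obtain ⟨hab1, hab2⟩ := hab
  obtain ⟨hbc1, hbc2⟩ := hbc
  refine ⟨hab1, hbc1, fun hac1 => ?_⟩
  have hacR : ℓ s(a, c) ∈ Rset G ℓ x := by
    by_contra h
    exact hnd ⟨hac1, h⟩
  rcases hbi a b c hab1 hbc1 hac1 with h | h | h
  · by_cases heq : ℓ s(a, b) = ℓ s(a, c)
    · exact hab2 (heq ▸ hacR)
    · apply hab2
      exact Relation.ReflTransGen.head
        (⟨heq, a, b, c, hab1, hbc1, hac1, rfl, rfl, h.symm⟩ :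
          ℓ s(a, b) ∈ Dset G ℓ (ℓ s(a, c))) hacR
  · exact hbc2 (h ▸ hacR)
  · exact hab2 (h ▸ hacR)
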